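/- arXiv:1801.10107 — 2 statements merged into one kernel-verified Lean document; each statement's English description precedes it below -/
import Mathlib

section
/- The isomorphism relation on countable graphs SPB reduces to the isomorphism relation on countable semigroups: there exists a Borel map f : X_Gr → X_Smg such that for all g, g' ∈ X_Gr, g ≅_Gr g' if and only if f g ≅_Smg f g', and for every g ∈ X_Gr the groups Aut(g) and Aut(f g) are isomorphic. -/
/-- Codes for countable graphs on domain `ℕ`: the edge relation as a function `ℕ → ℕ → Bool`. -/
abbrev GCode : Type := ℕ → ℕ → Bool

/-- `g` codes a graph: symmetric and irreflexive. -/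
def GCode.IsGraph (g : GCode) : Prop := (∀ m n, g m n = g n m) ∧ ∀ n, g n n = false

/-- `X_Gr`: the standard Borel space of (codes of) countable graphs. -/
def XGr : Set GCode := {g | g.IsGraph}

/-- Isomorphism of graph codes: a permutation of `ℕ` respecting the edge relations. -/
def GCode.Iso (g g' : GCode) : Prop := ∃ σ : Equiv.Perm ℕ, ∀ m n, g m n = g' (σ m) (σ n)

/-- Embeddability of graph codes: an injection of `ℕ` respecting the edge relations. -/
def GCode.Emb (g g' : GCode) : Prop :=
  ∃ h : ℕ → ℕ, Function.Injective h ∧ ∀ m n, g m n = g' (h m) (h n)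

/-- The automorphism group of a graph code: permutations of `ℕ` preserving the edge
relation. -/
def GCode.Aut (g : GCode) : Subgroup (Equiv.Perm ℕ) where
  carrier := {σ : Equiv.Perm ℕ | ∀ m n, g m n = g (σ m) (σ n)}
  one_mem' := fun _ _ => rfl
  mul_mem' := by
    intro σ τ hσ hτ m n
    simpa [Equiv.Perm.mul_apply] using (hτ m n).trans (hσ (τ m) (τ n))
  inv_mem' := by
    intro σ hσ m n
    have := hσ (σ⁻¹ m) (σ⁻¹ n)
    simpa [Equiv.Perm.inv_def, Equiv.apply_symm_apply] using this.symm

/-- Codes for countable semigroups on domain `ℕ`: a binary operation `ℕ → ℕ → ℕ`. -/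
abbrev SmgCode : Type := ℕ → ℕ → ℕ

/-- `m` codes a semigroup: the operation is associative. -/
def SmgCode.IsSmg (m : SmgCode) : Prop := ∀ a b c, m (m a b) c = m a (m b c)

/-- `X_Smg`: the standard Borel space of (codes of) countable semigroups. -/
def XSmg : Set SmgCode := {m | m.IsSmg}

/-- Isomorphism of semigroup codes. -/
def SmgCode.Iso (m m' : SmgCode) : Prop :=
  ∃ σ : Equiv.Perm ℕ, ∀ a b, σ (m a b) = m' (σ a) (σ b)

/-- The automorphism group of a semigroup code. -/
def SmgCode.Aut (m : SmgCode) : Subgroup (Equiv.Perm ℕ) where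
  carrier := {σ : Equiv.Perm ℕ | ∀ a b, σ (m a b) = m (σ a) (σ b)}
  one_mem' := fun _ _ => rfl
  mul_mem' := by
    intro σ τ hσ hτ a b
    simp only [Equiv.Perm.mul_apply]
    rw [hτ, hσ]
  inv_mem' := by
    intro σ hσ a b
    apply σ.injective
    rw [Equiv.Perm.inv_def, Equiv.apply_symm_apply, hσ, Equiv.apply_symm_apply, Equiv.apply_symm_apply]


namespace GraphToSmg


def F (g : GCode) : (ℕ → ℕ → ℕ) := fun a b =>
  if 2 ≤ a ∧ 2 ≤ b ∧ (a = b ∨ g (a - 2) (b - 2) = true) then 1 else 0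

lemma F_le (g : GCode) (a b : ℕ) : F g a b ≤ 1 := by
  unfold F; split <;> omega

lemma F_lt_left (g : GCode) {a : ℕ} (h : a < 2) (b : ℕ) : F g a b = 0 :=
  if_neg (fun hc => absurd hc.1 (by omega))

lemma F_lt_right (g : GCode) (a : ℕ) {b : ℕ} (h : b < 2) : F g a b = 0 :=
  if_neg (fun hc => absurd hc.2.1 (by omega))

def ext (τ : Equiv.Perm ℕ) : Equiv.Perm ℕ where
  toFun a := if a < 2 then a else τ (a - 2) + 2
  invFun a := if a < 2 then a else τ.symm (a - 2) + 2
  left_inv a := by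
    by_cases h : a < 2
    · simp [h]
    · have h2 : ¬ (τ (a - 2) + 2 < 2) := by omega
      simp only [if_neg h, if_neg h2, Nat.add_sub_cancel, Equiv.symm_apply_apply]
      omega
  right_inv a := by
    by_cases h : a < 2
    · simp [h]
    · have h2 : ¬ (τ.symm (a - 2) + 2 < 2) := by omega
      simp only [if_neg h, if_neg h2, Nat.add_sub_cancel, Equiv.apply_symm_apply]
      omega

lemma ext_lt (τ : Equiv.Perm ℕ) {a : ℕ} (h : a < 2) : ext τ a = a := by
  simp only [ext, Equiv.coe_fn_mk, if_pos h]

lemma ext_ge (τ : Equiv.Perm ℕ) {a : ℕ} (h : 2 ≤ a) : ext τ a = τ (a - 2) + 2 := by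
  simp only [ext, Equiv.coe_fn_mk]
  rw [if_neg (by omega)]

lemma ext_spec {g g' : GCode} {τ : Equiv.Perm ℕ} (h : ∀ m n, g m n = g' (τ m) (τ n))
    (a b : ℕ) : ext τ (F g a b) = F g' (ext τ a) (ext τ b) := by
  have hfix : ext τ (F g a b) = F g a b := ext_lt τ (by have := F_le g a b; omega)
  rw [hfix]
  by_cases ha : 2 ≤ a
  · by_cases hb : 2 ≤ b
    · rw [ext_ge τ ha, ext_ge τ hb]
      unfold F
      simp only [Nat.add_sub_cancel]
      refine if_congr ⟨?_, ?_⟩ rfl rfl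
      · rintro ⟨_, _, hc | hc⟩
        · subst hc; exact ⟨by omega, by omega, Or.inl rfl⟩
        · exact ⟨by omega, by omega, Or.inr ((h _ _) ▸ hc)⟩
      · rintro ⟨_, _, hc | hc⟩
        · have : τ (a - 2) = τ (b - 2) := by omega
          have := τ.injective this
          exact ⟨ha, hb, Or.inl (by omega)⟩
        · exact ⟨ha, hb, Or.inr ((h _ _) ▸ hc)⟩
    · rw [F_lt_right g a (by omega), F_lt_right g' (ext τ a) (by rw [ext_lt τ (by omega)]; omega)]
  · rw [F_lt_left g (by omega) b, F_lt_left g' (by rw [ext_lt τ (by omega)]; omega) (ext τ b)]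

lemma extract {g g' : GCode} (hg : g.IsGraph) (hg' : g'.IsGraph) (σ : Equiv.Perm ℕ)
    (hσ : ∀ a b, σ (F g a b) = F g' (σ a) (σ b)) :
    ∃ τ : Equiv.Perm ℕ, (∀ m n, g m n = g' (τ m) (τ n)) ∧ σ = ext τ := by
  have h0 : σ 0 ≤ 1 := by
    have h := hσ 0 0
    rw [F_lt_left g (by omega) 0] at h
    rw [h]; exact F_le g' _ _
  have h22 : F g 2 2 = 1 := if_pos ⟨le_refl 2, le_refl 2, Or.inl rfl⟩
  have h1 : σ 1 ≤ 1 := by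
    have h := hσ 2 2
    rw [h22] at h
    rw [h]; exact F_le g' _ _
  have hne : σ 0 ≠ σ 1 := fun h => by have := σ.injective h; omega
  have hge : ∀ a, 2 ≤ a → 2 ≤ σ a := by
    intro a ha
    by_contra hc
    push_neg at hc
    have : σ a = σ 0 ∨ σ a = σ 1 := by omega
    rcases this with h | h <;> · have := σ.injective h; omega
  have h1' : σ 1 = 1 := by
    have h := hσ 2 2
    rw [h22] at h
    rw [h]
    exact if_pos ⟨hge 2 (by omega), hge 2 (by omega), Or.inl rfl⟩
  have h0' : σ 0 = 0 := by omega
  have hsge : ∀ b, 2 ≤ b → 2 ≤ σ.symm b := by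
    intro b hb
    by_contra hc
    push_neg at hc
    have hcc : σ.symm b = 0 ∨ σ.symm b = 1 := by omega
    rcases hcc with h | h
    · have : b = σ 0 := by rw [← h, Equiv.apply_symm_apply]
      omega
    · have : b = σ 1 := by rw [← h, Equiv.apply_symm_apply]
      omega
  refine ⟨{ toFun := fun n => σ (n + 2) - 2
            invFun := fun n => σ.symm (n + 2) - 2
            left_inv := fun n => by
              have h2 : 2 ≤ σ (n + 2) := hge _ (by omega)
              have h3 : σ.symm (σ (n + 2) - 2 + 2) = n + 2 := by
                rw [Nat.sub_add_cancel h2, Equiv.symm_apply_apply]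
              simp only
              omega
            right_inv := fun n => by
              have h2 : 2 ≤ σ.symm (n + 2) := hsge _ (by omega)
              have h3 : σ (σ.symm (n + 2) - 2 + 2) = n + 2 := by
                rw [Nat.sub_add_cancel h2, Equiv.apply_symm_apply]
              simp only
              omega }, ?_, ?_⟩
  · intro m n
    rcases eq_or_ne m n with rfl | hmn
    · rw [hg.2, hg'.2]
    · have hs := hσ (m + 2) (n + 2)
      have hF : F g (m + 2) (n + 2) = if g m n = true then 1 else 0 := by
        unfold F
        simp only [Nat.add_sub_cancel]
        refine if_congr ⟨?_, ?_⟩ rfl rfl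
        · rintro ⟨_, _, hc | hc⟩
          · omega
          · exact hc
        · intro hh; exact ⟨by omega, by omega, Or.inr hh⟩
      rw [hF] at hs
      have hm2 : 2 ≤ σ (m + 2) := hge _ (by omega)
      have hn2 : 2 ≤ σ (n + 2) := hge _ (by omega)
      have hinj : σ (m + 2) ≠ σ (n + 2) := fun h => hmn (by have := σ.injective h; omega)
      simp only [Equiv.coe_fn_mk]
      have hF' : F g' (σ (m + 2)) (σ (n + 2))
          = if g' (σ (m + 2) - 2) (σ (n + 2) - 2) = true then 1 else 0 := by
        unfold F
        refine if_congr ⟨?_, ?_⟩ rfl rfl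
        · rintro ⟨_, _, hc | hc⟩
          · exact absurd hc hinj
          · exact hc
        · intro hh; exact ⟨hm2, hn2, Or.inr hh⟩
      rw [hF'] at hs
      rcases Bool.eq_false_or_eq_true (g m n) with hb | hb <;>
        rcases Bool.eq_false_or_eq_true (g' (σ (m + 2) - 2) (σ (n + 2) - 2)) with hb' | hb' <;>
          rw [hb, hb'] <;> rw [hb, hb'] at hs <;> simp only [if_true, if_false] at hs <;>
          simp at hs ⊢ <;> omega
  · apply Equiv.ext
    intro a
    by_cases h : a < 2
    · rw [ext_lt _ h]
      interval_cases a
      · exact h0'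
      · exact h1'
    · rw [ext_ge _ (by omega)]
      simp only [Equiv.coe_fn_mk]
      have : a - 2 + 2 = a := by omega
      rw [this]
      have := hge a (by omega)
      omega


lemma F_assoc (g : GCode) (a b c : ℕ) : F g (F g a b) c = F g a (F g b c) := by
  rw [F_lt_left g (by have := F_le g a b; omega) c,
      F_lt_right g a (by have := F_le g b c; omega)]

def Phi (g : GCode) : GCode.Aut g →* SmgCode.Aut (F g) where
  toFun τ := ⟨ext τ.1, fun a b => ext_spec τ.2 a b⟩
  map_one' := by
    apply Subtype.ext
    apply Equiv.ext
    intro a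
    by_cases h : a < 2
    · rw [ext_lt _ h]; rfl
    · rw [ext_ge _ (by omega)]
      simp only [Subgroup.coe_one, Equiv.Perm.coe_one, id_eq]
      omega
  map_mul' τ τ' := by
    apply Subtype.ext
    apply Equiv.ext
    intro a
    by_cases h : a < 2
    · simp only [Subgroup.coe_mul, Equiv.Perm.mul_apply]
      rw [ext_lt _ h, ext_lt _ h, ext_lt _ h]
    · simp only [Subgroup.coe_mul, Equiv.Perm.mul_apply]
      rw [ext_ge _ (by omega : (2:ℕ) ≤ a), ext_ge _ (by omega : (2:ℕ) ≤ a),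
          ext_ge _ (by omega : (2:ℕ) ≤ (τ'.1 : Equiv.Perm ℕ) (a - 2) + 2)]
      simp only [Nat.add_sub_cancel, Equiv.Perm.mul_apply]

lemma Phi_bijective {g : GCode} (hg : g.IsGraph) : Function.Bijective (Phi g) := by
  constructor
  · intro τ τ' h
    apply Subtype.ext
    apply Equiv.ext
    intro n
    have h1 : ext τ.1 (n + 2) = ext τ'.1 (n + 2) := by
      have := congrArg Subtype.val h
      exact congrFun (congrArg (fun (e : Equiv.Perm ℕ) => (e : ℕ → ℕ)) this) (n + 2)
    rw [ext_ge _ (by omega), ext_ge _ (by omega)] at h1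
    simpa using h1
  · rintro ⟨σ, hσ⟩
    obtain ⟨τ, hτ, rfl⟩ := extract hg hg σ hσ
    exact ⟨⟨τ, hτ⟩, rfl⟩

end GraphToSmg

/-- **The isomorphism relation on countable graphs SPB reduces to the isomorphism relation on
countable semigroups**: a Borel reduction which moreover preserves automorphism groups. -/
theorem graphs_spb_reduces_to_semigroups
    : ∃ f : {g : GCode // g ∈ XGr} → SmgCode, Measurable f ∧
      (∀ g, f g ∈ XSmg) ∧
      (∀ g g', GCode.Iso g.1 g'.1 ↔ SmgCode.Iso (f g) (f g')) ∧
      (∀ g, Nonempty (GCode.Aut g.1 ≃* SmgCode.Aut (f g))) := by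
  classical
  refine ⟨fun g => GraphToSmg.F g.1, ?_, ?_, ?_, ?_⟩
  · apply measurable_pi_lambda
    intro a
    apply measurable_pi_lambda
    intro b
    have heq : (fun g : {g : GCode // g ∈ XGr} => GraphToSmg.F g.1 a b)
        = (fun x : Bool => if 2 ≤ a ∧ 2 ≤ b ∧ (a = b ∨ x = true) then 1 else 0)
          ∘ (fun g : {g : GCode // g ∈ XGr} => g.1 (a - 2) (b - 2)) := rfl
    rw [heq]
    exact measurable_from_top.comp
      ((measurable_pi_apply (b - 2)).comp
        ((measurable_pi_apply (a - 2)).comp measurable_subtype_coe))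
  · intro g a b c
    exact GraphToSmg.F_assoc g.1 a b c
  · intro g g'
    constructor
    · rintro ⟨τ, hτ⟩
      exact ⟨GraphToSmg.ext τ, fun a b => GraphToSmg.ext_spec hτ a b⟩
    · rintro ⟨σ, hσ⟩
      obtain ⟨τ, hτ, -⟩ := GraphToSmg.extract g.2 g'.2 σ hσ
      exact ⟨τ, hτ⟩
  · intro g
    exact ⟨MulEquiv.ofBijective (GraphToSmg.Phi g.1) (GraphToSmg.Phi_bijective g.2)⟩
end

section
/- The isomorphism relation on countable graphs does not SPB reduce to the isomorphism relation on countable groups: there is no Borel map f : X_Gr → X_Gp such that for all g, g' ∈ X_Gr, g ≅_Gr g' if and only if f g ≅_Gp f g', and for every g ∈ X_Gr the groups Aut(g) and Aut(f g) are isomorphic. -/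
/-- Codes for countable groups on domain `ℕ`: a binary operation `ℕ → ℕ → ℕ` which is
associative, has an identity, and has inverses. -/
abbrev GpCode : Type := ℕ → ℕ → ℕ

/-- `m` codes a group structure on `ℕ`. -/
def GpCode.IsGp (m : GpCode) : Prop :=
  (∀ a b c, m (m a b) c = m a (m b c)) ∧
  ∃ e, (∀ a, m e a = a ∧ m a e = a) ∧ ∀ a, ∃ b, m a b = e ∧ m b a = e

/-- `X_Gp`: the standard Borel space of (codes of) countable groups. -/
def XGp : Set GpCode := {m | m.IsGp}

/-- Isomorphism of group codes. -/
def GpCode.Iso (m m' : GpCode) : Prop :=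
  ∃ σ : Equiv.Perm ℕ, ∀ a b, σ (m a b) = m' (σ a) (σ b)

/-- The automorphism group of a group code. -/
def GpCode.Aut (m : GpCode) : Subgroup (Equiv.Perm ℕ) where
  carrier := {σ : Equiv.Perm ℕ | ∀ a b, σ (m a b) = m (σ a) (σ b)}
  one_mem' := fun _ _ => rfl
  mul_mem' := by
    intro σ τ hσ hτ a b
    simp only [Equiv.Perm.mul_apply]
    rw [hτ, hσ]
  inv_mem' := by
    intro σ hσ a b
    apply σ.injective
    rw [Equiv.Perm.inv_def, Equiv.apply_symm_apply, hσ, Equiv.apply_symm_apply, Equiv.apply_symm_apply]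


section AutLemma

/-- Every infinite group has a nontrivial automorphism. -/
lemma exists_ne_mulAut (G : Type) [Group G] [Infinite G] :
    ∃ (e : G ≃* G) (x : G), e x ≠ x := by
  by_cases habel : ∀ x y : G, x * y = y * x
  · letI : CommGroup G := { ‹Group G› with mul_comm := habel }
    by_cases hinv : ∀ x : G, x⁻¹ = x
    · -- exponent 2: vector space over ZMod 2
      letI : Module (ZMod 2) (Additive G) :=
        AddCommGroup.zmodModule (by
          intro x
          show (2 : ℕ) • x = 0
          have : x.toMul * x.toMul = 1 := by
            have h := mul_inv_cancel x.toMul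
            rwa [hinv x.toMul] at h
          rw [two_nsmul]; exact this)
      haveI : Fact (Nat.Prime 2) := ⟨by norm_num⟩
      let B := Module.Basis.ofVectorSpace (ZMod 2) (Additive G)
      haveI : Infinite (Additive G) := ‹Infinite G›
      haveI : Infinite (Module.Basis.ofVectorSpaceIndex (ZMod 2) (Additive G)) := by
        by_contra h
        haveI : Finite (Module.Basis.ofVectorSpaceIndex (ZMod 2) (Additive G)) := not_infinite_iff_finite.mp h
        haveI : Finite ((Module.Basis.ofVectorSpaceIndex (ZMod 2) (Additive G) →₀ ZMod 2)) :=
          Finite.of_injective (fun f => (f : Module.Basis.ofVectorSpaceIndex (ZMod 2) (Additive G) → ZMod 2))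
            DFunLike.coe_injective
        haveI := Finite.of_injective _ B.repr.injective
        exact not_finite (Additive G)
      obtain ⟨i, j, hij⟩ := Infinite.instNontrivial (α := Module.Basis.ofVectorSpaceIndex (ZMod 2) (Additive G))
      classical
      let σ := B.equiv B (Equiv.swap i j)
      refine ⟨AddEquiv.toMultiplicative σ.toAddEquiv, (B i).toMul, ?_⟩
      have h1 : σ (B i) = B j := by simp [σ, Module.Basis.equiv_apply]
      have h2 : B j ≠ B i := fun h => hij (B.injective h).symm
      intro hcon
      exact h2 (by rw [← h1]; exact congrArg Additive.ofMul hcon)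
    · push_neg at hinv
      obtain ⟨x, hx⟩ := hinv
      exact ⟨MulEquiv.inv G, x, hx⟩
  · push_neg at habel
    obtain ⟨x, y, hxy⟩ := habel
    refine ⟨(MulAut.conj x : G ≃* G), y, ?_⟩
    intro h
    have h' : x * y * x⁻¹ = y := h
    exact hxy (by simpa [mul_assoc] using congrArg (· * x) h')

end AutLemma

/-- A wrapper type for `ℕ` carrying a group code, to avoid instance clashes. -/
structure GpWrap (m : GpCode) : Type where
  val : ℕ

/-- The group structure on `GpWrap m` induced by a group code `m`. -/
instance gpWrapMul (m : GpCode) : Mul (GpWrap m) := ⟨fun a b => ⟨m a.val b.val⟩⟩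
noncomputable def gpWrapOne (m : GpCode) (hm : m.IsGp) : One (GpWrap m) :=
  ⟨⟨Classical.choose hm.2⟩⟩
noncomputable def gpWrapInv (m : GpCode) (hm : m.IsGp) : Inv (GpWrap m) :=
  ⟨fun a => ⟨Classical.choose ((Classical.choose_spec hm.2).2 a.val)⟩⟩
noncomputable def gpWrapGroup (m : GpCode) (hm : m.IsGp) : Group (GpWrap m) :=
  letI := gpWrapOne m hm
  letI := gpWrapInv m hm
  Group.ofLeftAxioms
    (fun a b c => congrArg GpWrap.mk (hm.1 a.val b.val c.val))
    (fun a => congrArg GpWrap.mk (((Classical.choose_spec hm.2).1 a.val).1))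
    (fun a => congrArg GpWrap.mk
      (Classical.choose_spec ((Classical.choose_spec hm.2).2 a.val)).2)

lemma gpWrap_infinite (m : GpCode) : Infinite (GpWrap m) :=
  Infinite.of_injective (fun n : ℕ => (⟨n⟩ : GpWrap m)) (fun a b h => congrArg GpWrap.val h)

/-- Every group code has a nontrivial automorphism. -/
lemma gpCode_aut_nontrivial (m : GpCode) (hm : m ∈ XGp) :
    ∃ σ : Equiv.Perm ℕ, σ ∈ GpCode.Aut m ∧ σ ≠ 1 := by
  letI : Group (GpWrap m) := gpWrapGroup m hm
  haveI : Infinite (GpWrap m) := gpWrap_infinite m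
  obtain ⟨e, x, hx⟩ := exists_ne_mulAut (GpWrap m)
  refine ⟨⟨fun a => (e ⟨a⟩).val, fun a => (e.symm ⟨a⟩).val, ?_, ?_⟩, ?_, ?_⟩
  · intro a
    show (e.symm (e ⟨a⟩)).val = a
    rw [e.symm_apply_apply]
  · intro a
    show (e (e.symm ⟨a⟩)).val = a
    rw [e.apply_symm_apply]
  · intro a b
    show (e ⟨m a b⟩).val = m (e ⟨a⟩).val (e ⟨b⟩).val
    have : (⟨m a b⟩ : GpWrap m) = ⟨a⟩ * ⟨b⟩ := rfl
    rw [this, map_mul]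
    rfl
  · intro hcon
    apply hx
    have := congrFun (congrArg (fun σ : Equiv.Perm ℕ => σ.toFun) hcon) x.val
    simp only [Equiv.toFun_as_coe, Equiv.coe_fn_mk, Equiv.Perm.coe_one, id_eq] at this
    cases x
    exact congrArg GpWrap.mk this

/-- The ray graph on ℕ: edges between consecutive naturals. A rigid graph. -/
def rayG : GCode := fun m n => decide (m + 1 = n ∨ n + 1 = m)

lemma rayG_isGraph : rayG ∈ XGr := by
  constructor
  · intro m n; exact decide_eq_decide.mpr or_comm
  · intro n; simp [rayG]

lemma rayG_true (m n : ℕ) : rayG m n = true ↔ (m + 1 = n ∨ n + 1 = m) := by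
  simp [rayG]

lemma rayG_rigid (σ : Equiv.Perm ℕ) (hσ : σ ∈ GCode.Aut rayG) : σ = 1 := by
  have hiff : ∀ m n, (m + 1 = n ∨ n + 1 = m) ↔ (σ m + 1 = σ n ∨ σ n + 1 = σ m) := by
    intro m n
    rw [← rayG_true, ← rayG_true, hσ m n]
  have h0 : σ 0 = 0 := by
    rcases hk : σ 0 with _ | k
    · rfl
    exfalso
    -- σ⁻¹ k and σ⁻¹ (k+2) are both neighbors of 0, hence both equal 1
    have hnb : ∀ j, (σ j + 1 = σ 0 ∨ σ 0 + 1 = σ j) → j = 1 := by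
      intro j hj
      have := (hiff j 0).mpr hj
      omega
    have e1 : σ⁻¹ k = 1 := by
      apply hnb
      left
      rw [Equiv.Perm.inv_def, Equiv.apply_symm_apply, hk]
    have e2 : σ⁻¹ (k + 2) = 1 := by
      apply hnb
      right
      rw [Equiv.Perm.inv_def, Equiv.apply_symm_apply, hk]
    have := σ⁻¹.injective (e1.trans e2.symm)
    omega
  have key : ∀ n, σ n = n := by
    intro n
    induction n using Nat.strong_induction_on with
    | _ n ih =>
      match n with
      | 0 => exact h0
      | 1 =>
        have := (hiff 0 1).mp (by omega)
        rw [h0] at this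
        omega
      | (k + 2) =>
        have hk1 : σ (k + 1) = k + 1 := ih (k + 1) (by omega)
        have hk0 : σ k = k := ih k (by omega)
        have := (hiff (k + 1) (k + 2)).mp (by omega)
        rw [hk1] at this
        rcases this with h | h
        · omega
        · -- σ (k+2) = k, but σ k = k, injectivity
          exfalso
          have : σ (k + 2) = σ k := by omega
          have := σ.injective this
          omega
  ext n
  exact key n

/-- **The isomorphism relation on countable graphs does not SPB reduce to the isomorphism
relation on countable groups**: there is no Borel reduction of graph isomorphism to group
isomorphism which preserves automorphism groups. -/
theorem graphs_not_spb_reducible_to_groups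
    : ¬ ∃ f : {g : GCode // g ∈ XGr} → GpCode, Measurable f ∧
      (∀ g, f g ∈ XGp) ∧
      (∀ g g', GCode.Iso g.1 g'.1 ↔ GpCode.Iso (f g) (f g')) ∧
      (∀ g, Nonempty (GCode.Aut g.1 ≃* GpCode.Aut (f g))) := by

  rintro ⟨f, -, hgp, -, haut⟩
  set g : {g : GCode // g ∈ XGr} := ⟨rayG, rayG_isGraph⟩ with hg
  obtain ⟨φ⟩ := haut g
  obtain ⟨σ, hσmem, hσne⟩ := gpCode_aut_nontrivial (f g) (hgp g)
  -- Aut of rayG is trivial, hence subsingleton; transfer through φ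
  haveI : Subsingleton (GCode.Aut g.1) := by
    constructor
    rintro ⟨a, ha⟩ ⟨b, hb⟩
    have ha' : a = 1 := rayG_rigid a ha
    have hb' : b = 1 := rayG_rigid b hb
    simp [ha', hb']
  haveI : Subsingleton (GpCode.Aut (f g)) := φ.symm.injective.subsingleton
  have : (⟨σ, hσmem⟩ : GpCode.Aut (f g)) = ⟨1, (GpCode.Aut (f g)).one_mem⟩ :=
    Subsingleton.elim _ _
  exact hσne (congrArg Subtype.val this)
end
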